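/- Let a, b, c > 0, define R(x) = ax/((−ab+a+c)x+ab) and T(x) = a/(x+a) on [0,1]. For even m and odd n positive integers, there exist γ, δ, μ, λ ≥ 0 such that R^m T^n(x) = (a + γ + δx)/(a + c b^{m−1} + b^m x + μ + λx) and (R^m T^n)'(x) = −a b^m / (a + c b^{m−1} + b^m x + μ + λx)² for all x ∈ [0,1]. -/

import Mathlib

open Set Filter Topology

def Nice (a : ℝ) (f : ℝ → ℝ) (p q r s : ℝ) : Prop :=
  0 ≤ p ∧ a ≤ q ∧ p ≤ r ∧ q ≤ s ∧
  ∀ x ∈ Set.Icc (0:ℝ) 1, ∀ᶠ y in nhds x,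
    0 < q + p * y ∧ 0 < s + r * y ∧ f y = (q + p * y) / (s + r * y)

lemma ev_pos {p q x : ℝ} (hp : 0 ≤ p) (hq : 0 < q) (hx : x ∈ Set.Icc (0:ℝ) 1) :
    ∀ᶠ y in nhds x, 0 < q + p * y := by
  have hcont : ContinuousAt (fun y : ℝ => q + p * y) x := by fun_prop
  have hpos : 0 < q + p * x := by nlinarith [hx.1]
  exact hcont.eventually (eventually_gt_nhds hpos)

lemma nice_congr {a : ℝ} {f g : ℝ → ℝ} {p q r s : ℝ}
    (h : Nice a f p q r s) (hfg : ∀ y, f y = g y) : Nice a g p q r s := by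
  obtain ⟨h1, h2, h3, h4, h5⟩ := h
  exact ⟨h1, h2, h3, h4, fun x hx => (h5 x hx).mono
    (fun y hy => ⟨hy.1, hy.2.1, (hfg y) ▸ hy.2.2⟩)⟩

lemma nice_u {a : ℝ} (ha : 0 < a) {f : ℝ → ℝ} {p q r s : ℝ}
    (h : Nice a f p q r s) :
    Nice a (fun y => a / (a / (f y + a) + a))
      (p + a*r) (q + a*s) (p + (1+a)*r) (q + (1+a)*s) := by
  obtain ⟨hp, hq, hpr, hqs, hev⟩ := h
  have hr : 0 ≤ r := le_trans hp hpr
  have hs : a ≤ s := le_trans hq hqs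
  refine ⟨by nlinarith, by nlinarith, by nlinarith, by nlinarith, ?_⟩
  intro x hx
  have e1 : ∀ᶠ y in nhds x, 0 < (q + a*s) + (p + a*r) * y :=
    ev_pos (by nlinarith) (by nlinarith) hx
  have e2 : ∀ᶠ y in nhds x, 0 < (q + (1+a)*s) + (p + (1+a)*r) * y :=
    ev_pos (by nlinarith) (by nlinarith) hx
  filter_upwards [hev x hx, e1, e2] with y hy h1 h2
  obtain ⟨hN, hD, hfy⟩ := hy
  refine ⟨h1, h2, ?_⟩
  have hD' : s + r * y ≠ 0 := ne_of_gt hD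
  have hfa : 0 < f y + a := by rw [hfy]; positivity
  have hfa2 : 0 < a / (f y + a) + a := by positivity
  rw [hfy] at hfa hfa2 ⊢
  have k2 : (q + p*y) / (s + r*y) + a ≠ 0 := ne_of_gt hfa
  have k3 : a / ((q + p*y) / (s + r*y) + a) + a ≠ 0 := ne_of_gt hfa2
  have k4 : q + p*y + a*(s + r*y) ≠ 0 := by positivity
  rw [div_add' _ _ _ hD', div_div_eq_mul_div, div_add' _ _ _ k4, div_div_eq_mul_div]
  rw [div_eq_div_iff (by positivity) (by positivity)]
  ring

lemma nice_R {a b c : ℝ} (ha : 0 < a) (hb : 0 < b) (hc : 0 < c)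
    {f : ℝ → ℝ} {p q r s : ℝ} (h : Nice a f p q r s) :
    Nice a (fun y => a * f y / ((-(a * b) + a + c) * f y + a * b))
      p q (((a + c - a*b)*p + a*b*r)/a) (((a + c - a*b)*q + a*b*s)/a) := by
  obtain ⟨hp, hq, hpr, hqs, hev⟩ := h
  have hr : 0 ≤ r := le_trans hp hpr
  have hs : a ≤ s := le_trans hq hqs
  have ha' : a ≠ 0 := ne_of_gt ha
  have hr' : p ≤ ((a + c - a*b)*p + a*b*r)/a := by
    rw [le_div_iff₀ ha]
    nlinarith [mul_nonneg (mul_nonneg ha.le hb.le) (sub_nonneg.mpr hpr), mul_nonneg hc.le hp]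
  have hs' : q ≤ ((a + c - a*b)*q + a*b*s)/a := by
    rw [le_div_iff₀ ha]
    nlinarith [mul_nonneg (mul_nonneg ha.le hb.le) (sub_nonneg.mpr hqs), mul_nonneg hc.le (le_trans ha.le hq)]
  refine ⟨hp, hq, hr', hs', ?_⟩
  intro x hx
  have e2 : ∀ᶠ y in nhds x,
      0 < ((a + c - a*b)*q + a*b*s)/a + (((a + c - a*b)*p + a*b*r)/a) * y :=
    ev_pos (le_trans hp hr') (lt_of_lt_of_le ha (le_trans hq hs')) hx
  filter_upwards [hev x hx, e2] with y hy h2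
  obtain ⟨hN, hD, hfy⟩ := hy
  refine ⟨hN, h2, ?_⟩
  have hD' : s + r * y ≠ 0 := ne_of_gt hD
  have hden : (-(a * b) + a + c) * f y + a * b =
      a * ((((a + c - a*b)*q + a*b*s)/a) + (((a + c - a*b)*p + a*b*r)/a) * y) / (s + r*y) := by
    rw [hfy, eq_div_iff hD', add_mul, mul_assoc, div_mul_cancel₀ _ hD']; field_simp; ring
  have hden2 : (-(a * b) + a + c) * f y + a * b ≠ 0 := by
    rw [hden]; positivity
  rw [hden, hfy]
  have hZ : ((a + c - a*b)*q + a*b*s)/a + (((a + c - a*b)*p + a*b*r)/a) * y ≠ 0 := ne_of_gt h2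
  rw [mul_div_assoc', div_div_div_cancel_right₀ hD', mul_div_mul_left _ _ ha']

lemma inner_nice {a : ℝ} (ha : 0 < a) (T : ℝ → ℝ) (hT : ∀ x : ℝ, T x = a / (x + a)) :
    ∀ i : ℕ, ∃ p q r s : ℝ, Nice a (T^[2*i+1]) p q r s ∧ 1 ≤ r - p ∧ p*s - q*r = -a := by
  intro i
  induction i with
  | zero =>
    refine ⟨0, a, 1, a, ⟨le_refl 0, le_refl a, by norm_num, le_refl a, ?_⟩, by norm_num, by ring⟩
    intro x hx
    have e1 : ∀ᶠ y in nhds x, 0 < a + 1 * y := ev_pos zero_le_one ha hx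
    filter_upwards [e1] with y hy
    refine ⟨by simpa using ha, hy, ?_⟩
    rw [show 2*0+1 = 1 from rfl, Function.iterate_one, hT]
    rw [zero_mul, add_zero, one_mul, add_comm]
  | succ i ih =>
    obtain ⟨p, q, r, s, hN, hrp, hdet⟩ := ih
    have key : ∀ y, T^[2*(i+1)+1] y = a / (a / (T^[2*i+1] y + a) + a) := by
      intro y
      have e : 2*(i+1)+1 = (2*i+1) + 1 + 1 := by ring
      rw [e, Function.iterate_succ_apply', Function.iterate_succ_apply', hT, hT]
    refine ⟨p + a*r, q + a*s, p + (1+a)*r, q + (1+a)*s,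
      nice_congr (nice_u ha hN) (fun y => (key y).symm), ?_, ?_⟩
    · have e : (p + (1+a)*r) - (p + a*r) = r := by ring
      rw [e]; linarith [hN.1]
    · have e : (p + a*r)*(q + (1+a)*s) - (q + a*s)*(p + (1+a)*r) = p*s - q*r := by ring
      rw [e, hdet]

lemma outer_nice {a b c : ℝ} (ha : 0 < a) (hb : 0 < b) (hc : 0 < c)
    (R : ℝ → ℝ) (hR : ∀ x : ℝ, R x = a * x / ((-(a * b) + a + c) * x + a * b))
    (g : ℝ → ℝ) {p₀ q₀ r₀ s₀ : ℝ} (h0 : Nice a g p₀ q₀ r₀ s₀) (hrp0 : 1 ≤ r₀ - p₀) :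
    ∀ j : ℕ, ∃ p q r s : ℝ, Nice a (fun z => R^[j+1] (g z)) p q r s ∧
      b^(j+1) ≤ r - p ∧ c * b^j ≤ s - q ∧ p*s - q*r = b^(j+1) * (p₀*s₀ - q₀*r₀) := by
  have ha' : a ≠ 0 := ne_of_gt ha
  intro j
  induction j with
  | zero =>
    refine ⟨p₀, q₀, ((a + c - a*b)*p₀ + a*b*r₀)/a, ((a + c - a*b)*q₀ + a*b*s₀)/a,
      nice_congr (nice_R ha hb hc h0) ?_, ?_, ?_, ?_⟩
    · intro y
      rw [zero_add, Function.iterate_one, hR]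
    · have e : ((a + c - a*b)*p₀ + a*b*r₀)/a - p₀ = (c*p₀ + a*b*(r₀-p₀))/a := by field_simp; ring
      rw [e, le_div_iff₀ ha, pow_one]
      have hp0 : 0 ≤ p₀ := h0.1
      nlinarith [mul_le_mul_of_nonneg_left hrp0 (mul_pos ha hb).le]
    · have e : ((a + c - a*b)*q₀ + a*b*s₀)/a - q₀ = (c*q₀ + a*b*(s₀-q₀))/a := by field_simp; ring
      rw [e, le_div_iff₀ ha, pow_zero, mul_one]
      have hq0 : a ≤ q₀ := h0.2.1
      have hsq0 : q₀ ≤ s₀ := h0.2.2.2.1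
      nlinarith [mul_nonneg (mul_pos ha hb).le (sub_nonneg.mpr hsq0)]
    · field_simp
      ring
  | succ j ih =>
    obtain ⟨p, q, r, s, hN, hrp, hsq, hdet⟩ := ih
    have key : ∀ y, R^[j+1+1] (g y) = a * (R^[j+1] (g y)) /
        ((-(a * b) + a + c) * (R^[j+1] (g y)) + a * b) := by
      intro y
      rw [Function.iterate_succ_apply', hR]
    refine ⟨p, q, ((a + c - a*b)*p + a*b*r)/a, ((a + c - a*b)*q + a*b*s)/a,
      nice_congr (nice_R ha hb hc hN) (fun y => (key y).symm), ?_, ?_, ?_⟩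
    · have e : ((a + c - a*b)*p + a*b*r)/a - p = (c*p + a*b*(r-p))/a := by field_simp; ring
      rw [e, le_div_iff₀ ha]
      have hp : 0 ≤ p := hN.1
      have e2 : b^(j+1+1) = b^(j+1)*b := pow_succ b (j+1)
      rw [e2]
      nlinarith [mul_le_mul_of_nonneg_left hrp (mul_pos ha hb).le, mul_nonneg hc.le hp]
    · have e : ((a + c - a*b)*q + a*b*s)/a - q = (c*q + a*b*(s-q))/a := by field_simp; ring
      rw [e, le_div_iff₀ ha]
      have hq : a ≤ q := hN.2.1
      have e3 : b^(j+1) = b^j*b := pow_succ b j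
      rw [e3]
      nlinarith [mul_le_mul_of_nonneg_left hsq (mul_pos ha hb).le,
        mul_le_mul_of_nonneg_left hq hc.le, pow_pos hb j]
    · have e : p*(((a + c - a*b)*q + a*b*s)/a) - q*(((a + c - a*b)*p + a*b*r)/a)
          = b*(p*s - q*r) := by field_simp; ring
      rw [e, hdet, pow_succ]
      ring

/-- formulas for R^m T^n and its derivative, m even, n odd, for
R(x) = ax/((−ab+a+c)x+ab) and T(x) = a/(x+a). -/
theorem stmt_11 (a b c : ℝ) (ha : 0 < a) (hb : 0 < b) (hc : 0 < c)
    (R T : ℝ → ℝ)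
    (hR : ∀ x : ℝ, R x = a * x / ((-(a * b) + a + c) * x + a * b))
    (hT : ∀ x : ℝ, T x = a / (x + a))
    (m n : ℕ) (hm : Even m) (hm0 : 0 < m) (hn : Odd n) :
    ∃ γ δ μ lam : ℝ, 0 ≤ γ ∧ 0 ≤ δ ∧ 0 ≤ μ ∧ 0 ≤ lam ∧
      ∀ x ∈ Set.Icc (0:ℝ) 1,
        R^[m] (T^[n] x) =
          (a + γ + δ * x) / (a + c * b ^ (m - 1) + b ^ m * x + μ + lam * x) ∧
        deriv (fun z => R^[m] (T^[n] z)) x =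
          -(a * b ^ m) / (a + c * b ^ (m - 1) + b ^ m * x + μ + lam * x) ^ 2 := by
  obtain ⟨i, hi⟩ := hn
  obtain ⟨p₀, q₀, r₀, s₀, hN0, hrp0, hdet0⟩ := inner_nice ha T hT i
  have hni : n = 2*i+1 := by omega
  rw [← hni] at hN0
  obtain ⟨j, hj⟩ : ∃ j : ℕ, m = j + 1 := ⟨m - 1, (Nat.succ_pred_eq_of_pos hm0).symm⟩
  obtain ⟨p, q, r, s, hN, hrp, hsq, hdet⟩ :=
    outer_nice ha hb hc R hR (T^[n]) hN0 hrp0 j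
  rw [← hj] at hN hrp hdet
  have hm1 : m - 1 = j := by omega
  rw [hm1]
  obtain ⟨hp, hq, hpr, hqs, hev⟩ := hN
  refine ⟨q - a, p, s - (a + c * b ^ j), r - b ^ m, by linarith, hp, ?_, ?_, ?_⟩
  · have : c * b ^ j ≤ s - q := hsq
    linarith
  · have hp0 : 0 ≤ p₀ := hN0.1
    have : b ^ m * 1 ≤ b ^ m * (r₀ - p₀) := by
      apply mul_le_mul_of_nonneg_left (by linarith) (pow_pos hb m).le
    nlinarith
  · intro x hx
    have hx0 := (hev x hx).self_of_nhds
    obtain ⟨hNpos, hDpos, hval⟩ := hx0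
    have eden : a + c * b ^ j + b ^ m * x + (s - (a + c * b ^ j)) + (r - b ^ m) * x
        = s + r * x := by ring
    have enum : a + (q - a) + p * x = q + p * x := by ring
    constructor
    · rw [eden, enum]
      exact hval
    · have hevEq : (fun z => R^[m] (T^[n] z)) =ᶠ[nhds x]
          (fun y => (q + p * y) / (s + r * y)) :=
        (hev x hx).mono (fun y hy => hy.2.2)
      rw [hevEq.deriv_eq]
      have h1 : HasDerivAt (fun y : ℝ => q + p * y) p x := by
        simpa using ((hasDerivAt_id x).const_mul p).const_add q
      have h2 : HasDerivAt (fun y : ℝ => s + r * y) r x := by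
        simpa using ((hasDerivAt_id x).const_mul r).const_add s
      have hne : s + r * x ≠ 0 := ne_of_gt hDpos
      rw [(show HasDerivAt (fun y => (q + p * y) / (s + r * y)) _ x from h1.div h2 hne).deriv]
      have hd : p * s - q * r = -(a * b ^ m) := by rw [hdet, hdet0]; ring
      have e : p * (s + r * x) - (q + p * x) * r = -(a * b ^ m) := by
        linear_combination hd
      rw [e, eden]
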